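/- (Ordering property of constrained maximizers, used in the proof of Lemma 2.) Let m ≥ 1, let n : Fin m → ℕ be counts, let S ∈ (0, ∞) and c ∈ (0, ∞) with S ≤ m·c, and let p maximize ∏ j, (p j)^(n j) over the set { p : Fin m → ℝ | 0 ≤ p j ≤ c for all j, and ∑ j, p j = S }. Then p respects the order of the counts: for all indices j, k, if n j > n k then p j ≥ p k. -/
import Mathlib


/-- ordering property of constrained maximizers: if `p`
maximizes `∏ j, (p j)^(n j)` over all vectors with `0 ≤ p j ≤ c` and
`∑ j, p j = S` (where `0 < S ≤ m·c` and `c > 0`), then `p` respects the order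
of the counts: `n j > n k` implies `p j ≥ p k`. -/
theorem stmt_5 (m : ℕ) (hm : 1 ≤ m) (n : Fin m → ℕ) (S c : ℝ)
    (hS : 0 < S) (hc : 0 < c) (hSc : S ≤ (m : ℝ) * c)
    (p : Fin m → ℝ)
    (hp0 : ∀ j, 0 ≤ p j) (hpc : ∀ j, p j ≤ c) (hpS : (∑ j, p j) = S)
    (hmax : ∀ q : Fin m → ℝ, (∀ j, 0 ≤ q j) → (∀ j, q j ≤ c) →
      (∑ j, q j) = S → ∏ j, q j ^ n j ≤ ∏ j, p j ^ n j) :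
    ∀ j k, n k < n j → p k ≤ p j := by
  have hm0 : (0:ℝ) < m := by exact_mod_cast Nat.lt_of_lt_of_le Nat.zero_lt_one hm
  have hq0 : (0:ℝ) < S / m := div_pos hS hm0
  -- the maximum is positive
  have hppos : 0 < ∏ j, p j ^ n j := by
    have h1 : (0:ℝ) < ∏ j : Fin m, (S / m) ^ n j :=
      Finset.prod_pos (fun i _ => pow_pos hq0 _)
    have h2 := hmax (fun _ => S / m) (fun _ => hq0.le)
      (fun _ => by rw [div_le_iff₀ hm0]; linarith)
      (by
        simp only [Finset.sum_const, Finset.card_univ, Fintype.card_fin, nsmul_eq_mul]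
        field_simp)
    linarith
  have hne : ∀ i, p i ^ n i ≠ 0 := by
    intro i h
    rw [Finset.prod_eq_zero (Finset.mem_univ i) h] at hppos
    exact lt_irrefl _ hppos
  intro j k hnk
  by_contra hlt
  push_neg at hlt
  have hjk : j ≠ k := fun h => by subst h; exact lt_irrefl _ hnk
  have hnj0 : n j ≠ 0 := by omega
  have hpj : 0 < p j := by
    rcases lt_or_eq_of_le (hp0 j) with h | h
    · exact h
    · exact absurd (by rw [← h, zero_pow hnj0]) (hne j)
  -- swap j and k
  set q : Fin m → ℝ := fun i => p (Equiv.swap j k i) with hq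
  have hq0' : ∀ i, 0 ≤ q i := fun i => hp0 _
  have hqc : ∀ i, q i ≤ c := fun i => hpc _
  have hqS : (∑ i, q i) = S := by
    rw [← hpS]; exact Equiv.sum_comp (Equiv.swap j k) p
  have hle := hmax q hq0' hqc hqS
  -- split products
  have hkmem : k ∈ Finset.univ.erase j :=
    Finset.mem_erase.2 ⟨(Ne.symm hjk), Finset.mem_univ k⟩
  have split : ∀ f : Fin m → ℝ, ∏ i, f i ^ n i
      = f j ^ n j * (f k ^ n k * ∏ i ∈ (Finset.univ.erase j).erase k, f i ^ n i) := by
    intro f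
    rw [← Finset.mul_prod_erase Finset.univ (fun i => f i ^ n i) (Finset.mem_univ j),
        ← Finset.mul_prod_erase _ (fun i => f i ^ n i) hkmem]
  have tail_eq : ∏ i ∈ (Finset.univ.erase j).erase k, q i ^ n i
      = ∏ i ∈ (Finset.univ.erase j).erase k, p i ^ n i := by
    apply Finset.prod_congr rfl
    intro i hi
    have hik : i ≠ k := (Finset.mem_erase.1 hi).1
    have hij : i ≠ j := (Finset.mem_erase.1 (Finset.mem_erase.1 hi).2).1
    rw [hq]
    simp [Equiv.swap_apply_of_ne_of_ne hij hik]
  set R := ∏ i ∈ (Finset.univ.erase j).erase k, p i ^ n i with hR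
  have hRpos : 0 < R :=
    Finset.prod_pos (fun i _ => lt_of_le_of_ne (pow_nonneg (hp0 i) _) (Ne.symm (hne i)))
  have hqj : q j = p k := by simp [hq]
  have hqk : q k = p j := by simp [hq]
  rw [split q, split p, tail_eq, hqj, hqk] at hle
  -- key strict inequality
  obtain ⟨d, hd⟩ : ∃ d, n j = n k + d := ⟨n j - n k, (Nat.add_sub_cancel' hnk.le).symm⟩
  have hd0 : d ≠ 0 := by omega
  have hkey : p j ^ n j * p k ^ n k < p k ^ n j * p j ^ n k := by
    have hpow : p j ^ d < p k ^ d := pow_lt_pow_left₀ hlt (hp0 j) hd0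
    have hbase : 0 < p j ^ n k * p k ^ n k :=
      mul_pos (pow_pos hpj _) (pow_pos (hpj.trans hlt) _)
    calc p j ^ n j * p k ^ n k = (p j ^ n k * p k ^ n k) * p j ^ d := by
          rw [hd, pow_add]; ring
      _ < (p j ^ n k * p k ^ n k) * p k ^ d := by
          exact mul_lt_mul_of_pos_left hpow hbase
      _ = p k ^ n j * p j ^ n k := by rw [hd, pow_add]; ring
  nlinarith [mul_lt_mul_of_pos_right hkey hRpos]
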